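/- Let G be a finite simple graph with vertex set [n] = {1,...,n}, with edges ordered lexicographically. The following are equivalent: (a) for every m ≥ 0, the m-edge increasing spanning forests of G are exactly the m-edge NBC sets of G; (b) the 2-edge increasing spanning forests of G are exactly the 2-edge NBC sets of G; (c) the natural ordering 1,2,...,n is a perfect elimination ordering of G. -/

import Mathlib

open Polynomial Classical

/-- A simple graph on a linearly ordered vertex type is an *increasing forest*. -/
def IsIncreasingForest {V : Type*} [LinearOrder V] (F : SimpleGraph V) : Prop :=
  F.IsAcyclic ∧ ∀ (r v : V), (∀ w, F.Reachable r w → r ≤ w) →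
    ∀ p : F.Walk r v, p.IsPath → p.support.Chain' (· < ·)

/-- `F` is an increasing spanning forest of `G`. -/
def IsISF {n : ℕ} (G : SimpleGraph (Fin n)) (F : Finset (Sym2 (Fin n))) : Prop :=
  (F : Set (Sym2 (Fin n))) ⊆ G.edgeSet ∧
    IsIncreasingForest (SimpleGraph.fromEdgeSet (F : Set (Sym2 (Fin n))))

/-- Lexicographic order on edges, writing each edge with its smaller endpoint first. -/
def edgeLE {n : ℕ} (e f : Sym2 (Fin n)) : Prop :=
  Sym2.inf e < Sym2.inf f ∨ (Sym2.inf e = Sym2.inf f ∧ Sym2.sup e ≤ Sym2.sup f)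

/-- `B` is a broken circuit of `G`. -/
def IsBrokenCircuit {n : ℕ} (G : SimpleGraph (Fin n)) (B : Finset (Sym2 (Fin n))) : Prop :=
  ∃ (v : Fin n) (c : G.Walk v v) (e : Sym2 (Fin n)), c.IsCycle ∧ e ∈ c.edges ∧
    (∀ f ∈ c.edges, edgeLE e f) ∧ B = c.edges.toFinset.erase e

/-- `N` is an NBC set of `G`: a set of edges of `G` containing no broken circuit. -/
def IsNBC {n : ℕ} (G : SimpleGraph (Fin n)) (N : Finset (Sym2 (Fin n))) : Prop :=
  (N : Set (Sym2 (Fin n))) ⊆ G.edgeSet ∧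
    ∀ B : Finset (Sym2 (Fin n)), IsBrokenCircuit G B → ¬ B ⊆ N

/-- The natural ordering `1, 2, …, n` is a perfect elimination ordering of `G`. -/
def IsPEO {n : ℕ} (G : SimpleGraph (Fin n)) : Prop :=
  ∀ i j k : Fin n, i < j → j < k → G.Adj i k → G.Adj j k → G.Adj i j

open SimpleGraph Walk

section WalkAux
variable {V : Type*} {G : SimpleGraph V}

lemma aux_getVert_support_get {u v : V} (p : G.Walk u v) (i : ℕ) (hi : i < p.support.length) :
    p.support.get ⟨i, hi⟩ = p.getVert i := by
  induction p generalizing i with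
  | nil =>
    simp only [Walk.support_nil, List.length_singleton] at hi
    interval_cases i
    rfl
  | cons h q ih =>
    cases i with
    | zero => rfl
    | succ n =>
      simp only [Walk.support_cons, List.get_cons_succ, Walk.getVert_cons_succ]
      exact ih n _

lemma aux_edge_getVert_mem {u v : V} (p : G.Walk u v) {i : ℕ} (hi : i < p.length) :
    s(p.getVert i, p.getVert (i+1)) ∈ p.edges := by
  have h := p.toSubgraph_adj_getVert hi
  rw [← Subgraph.mem_edgeSet] at h
  rwa [p.mem_edges_toSubgraph] at h

lemma aux_cycle_getVert_inj {u : V} {c : G.Walk u u} (hc : c.IsCycle) {a b : ℕ}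
    (ha1 : 1 ≤ a) (ha2 : a ≤ c.length) (hb1 : 1 ≤ b) (hb2 : b ≤ c.length)
    (h : c.getVert a = c.getVert b) : a = b := by
  have hnd := hc.support_nodup
  have hlen : c.support.tail.length = c.length := by
    have := c.length_support
    simp [List.length_tail, this]
  have key : ∀ (i : ℕ) (hi : i < c.support.tail.length),
      c.support.tail.get ⟨i, hi⟩ = c.getVert (i+1) := by
    intro i hi
    have h1 : i + 1 < c.support.length := by
      have := c.length_support
      omega
    rw [← aux_getVert_support_get c (i+1) h1]
    rw [List.get_tail]
  have h1 : a - 1 < c.support.tail.length := by omega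
  have h2 : b - 1 < c.support.tail.length := by omega
  have e1 : c.support.tail.get ⟨a-1, h1⟩ = c.getVert a := by
    rw [key]; congr 1; omega
  have e2 : c.support.tail.get ⟨b-1, h2⟩ = c.getVert b := by
    rw [key]; congr 1; omega
  have := (hnd.get_inj_iff).mp (e1.trans (h.trans e2.symm))
  have := Fin.mk.injEq .. ▸ this
  omega

lemma aux_cycle_exists_two_base {v : V} {c : G.Walk v v} (hc : c.IsCycle) :
    ∃ a b, a ≠ b ∧ s(v, a) ∈ c.edges ∧ s(v, b) ∈ c.edges := by
  have h3 := hc.three_le_length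
  refine ⟨c.getVert 1, c.getVert (c.length - 1), ?_, ?_, ?_⟩
  · intro h
    have := aux_cycle_getVert_inj hc (by omega) (by omega) (by omega) (by omega) h
    omega
  · have := aux_edge_getVert_mem c (show 0 < c.length by omega)
    simpa using this
  · have h0 := aux_edge_getVert_mem c (show c.length - 1 < c.length by omega)
    have h2 : c.getVert (c.length - 1 + 1) = v := by
      rw [show c.length - 1 + 1 = c.length by omega]
      exact c.getVert_length
    rw [h2] at h0
    rwa [Sym2.eq_swap] at h0

lemma aux_cycle_two_edges [DecidableEq V] {u : V} {c : G.Walk u u} (hc : c.IsCycle) {v : V}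
    (hv : v ∈ c.support) :
    ∃ a b, a ≠ b ∧ s(v, a) ∈ c.edges ∧ s(v, b) ∈ c.edges := by
  obtain ⟨a, b, hab, h1, h2⟩ := aux_cycle_exists_two_base (hc.rotate hv)
  exact ⟨a, b, hab, (c.rotate_edges _ hv).mem_iff.mp h1, (c.rotate_edges _ hv).mem_iff.mp h2⟩

end WalkAux

section Main
variable {n : ℕ}

def PairFree (F : Finset (Sym2 (Fin n))) : Prop :=
  ∀ i j k : Fin n, i < j → j < k → s(i,k) ∈ F → s(j,k) ∈ F → False

lemma pf_no_two {F : Finset (Sym2 (Fin n))} (pf : PairFree F) {x y k : Fin n}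
    (hx : x < k) (hy : y < k) (hxy : x ≠ y)
    (h1 : s(x,k) ∈ F) (h2 : s(y,k) ∈ F) : False := by
  rcases hxy.lt_or_gt with h|h
  · exact pf x y k h hy h1 h2
  · exact pf y x k h hx h2 h1

lemma fromEdgeSet_adj_mem {F : Finset (Sym2 (Fin n))} {x y : Fin n}
    (h : (SimpleGraph.fromEdgeSet (F : Set (Sym2 (Fin n)))).Adj x y) : s(x,y) ∈ F := by
  rw [SimpleGraph.fromEdgeSet_adj] at h
  exact_mod_cast h.1

-- ISF direction: increasing forest → pair free
lemma incForest_pairFree {F : Finset (Sym2 (Fin n))}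
    (hIF : IsIncreasingForest (SimpleGraph.fromEdgeSet (F : Set (Sym2 (Fin n))))) :
    PairFree F := by
  classical
  intro i j k hij hjk hikF hjkF
  set H := SimpleGraph.fromEdgeSet (F : Set (Sym2 (Fin n))) with hH
  have hik' : H.Adj i k := by
    rw [hH, SimpleGraph.fromEdgeSet_adj]
    exact ⟨by exact_mod_cast hikF, (hij.trans hjk).ne⟩
  have hjk' : H.Adj j k := by
    rw [hH, SimpleGraph.fromEdgeSet_adj]
    exact ⟨by exact_mod_cast hjkF, hjk.ne⟩
  obtain ⟨hac, hinc⟩ := hIF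
  set s : Finset (Fin n) := Finset.univ.filter (fun w => H.Reachable k w) with hs
  have hks : k ∈ s := by rw [hs]; exact Finset.mem_filter.mpr ⟨Finset.mem_univ _, SimpleGraph.Reachable.refl k⟩
  have hsne : s.Nonempty := ⟨k, hks⟩
  set r := s.min' hsne with hr
  have hrs : r ∈ s := s.min'_mem hsne
  have hkr : H.Reachable k r := by
    rw [hs] at hrs; exact (Finset.mem_filter.mp hrs).2
  have hrmin : ∀ w, H.Reachable r w → r ≤ w := by
    intro w hw
    refine s.min'_le w ?_
    rw [hs]; exact Finset.mem_filter.mpr ⟨Finset.mem_univ _, hkr.trans hw⟩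
  have key : ∀ x : Fin n, x < k → H.Adj x k →
      ∃ p : H.Walk r x, p.IsPath ∧ k ∉ p.support := by
    intro x hxk hadj
    have hrx : H.Reachable r x := hkr.symm.trans hadj.symm.reachable
    obtain ⟨w⟩ := hrx
    refine ⟨w.bypass, w.bypass_isPath, ?_⟩
    intro hk
    have hchain : w.bypass.support.Chain' (· < ·) := hinc r x hrmin w.bypass w.bypass_isPath
    have hpw : w.bypass.support.Pairwise (· < ·) := List.isChain_iff_pairwise.mp hchain
    have hxlast : w.bypass.support.getLast (Walk.support_ne_nil _) = x :=
      Walk.getLast_support _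
    have hdecomp := (w.bypass.support).dropLast_append_getLast (Walk.support_ne_nil _)
    rw [← hdecomp] at hpw hk
    rw [List.pairwise_append] at hpw
    rcases List.mem_append.mp hk with hk1 | hk2
    · have := hpw.2.2 k hk1 _ (List.mem_singleton_self _)
      rw [hxlast] at this
      exact absurd this (by omega)
    · rw [List.mem_singleton, hxlast] at hk2
      exact absurd hk2 hxk.ne'
  obtain ⟨p, hp, hkp⟩ := key i (hij.trans hjk) hik'
  obtain ⟨q, hq, hkq⟩ := key j hjk hjk'
  have hpi : (p.concat hik').IsPath := by
    rw [Walk.isPath_def, Walk.support_concat, List.nodup_append]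
    exact ⟨hp.support_nodup, List.nodup_singleton _, by simpa using fun (a : Fin n) (ha : a ∈ p.support) (h : a = k) => hkp (h ▸ ha)⟩
  have hqj : (q.concat hjk').IsPath := by
    rw [Walk.isPath_def, Walk.support_concat, List.nodup_append]
    exact ⟨hq.support_nodup, List.nodup_singleton _, by simpa using fun (a : Fin n) (ha : a ∈ q.support) (h : a = k) => hkq (h ▸ ha)⟩
  have huniq := SimpleGraph.isAcyclic_iff_path_unique.mp hac
    ⟨p.concat hik', hpi⟩ ⟨q.concat hjk', hqj⟩
  have hwalks : p.concat hik' = q.concat hjk' := congrArg Subtype.val huniq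
  have hsup : p.support ++ [k] = q.support ++ [k] := by
    have := congrArg Walk.support hwalks
    rwa [Walk.support_concat, Walk.support_concat] at this
  have hsup' : p.support = q.support := List.append_cancel_right hsup
  have : i = j := by
    have h1 : p.support.getLast (Walk.support_ne_nil _) = i := Walk.getLast_support _
    have h2 : q.support.getLast (Walk.support_ne_nil _) = j := Walk.getLast_support _
    rw [← h1, ← h2]
    congr 1
  exact hij.ne this

lemma pairFree_acyclic {F : Finset (Sym2 (Fin n))} (pf : PairFree F) :
    (SimpleGraph.fromEdgeSet (F : Set (Sym2 (Fin n)))).IsAcyclic := by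
  classical
  intro u c hc
  have hne : c.support.toFinset.Nonempty := ⟨u, by simp⟩
  obtain ⟨a, b, hab, ha, hb⟩ := aux_cycle_two_edges hc
    (show c.support.toFinset.max' hne ∈ c.support by
      have := c.support.toFinset.max'_mem hne; simpa using this)
  generalize hk : c.support.toFinset.max' hne = k at *
  have haF : s(k,a) ∈ F ∧ k ≠ a := by
    have h1 := c.edges_subset_edgeSet ha
    rw [SimpleGraph.edgeSet_fromEdgeSet] at h1
    obtain ⟨h2, h3⟩ := h1
    exact ⟨by exact_mod_cast h2, by simpa [Sym2.mk_isDiag_iff] using h3⟩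
  have hbF : s(k,b) ∈ F ∧ k ≠ b := by
    have h1 := c.edges_subset_edgeSet hb
    rw [SimpleGraph.edgeSet_fromEdgeSet] at h1
    obtain ⟨h2, h3⟩ := h1
    exact ⟨by exact_mod_cast h2, by simpa [Sym2.mk_isDiag_iff] using h3⟩
  have hak : a < k := by
    have hmem : a ∈ c.support := c.snd_mem_support_of_mem_edges ha
    have := c.support.toFinset.le_max' a (by simpa using hmem)
    rw [hk] at this
    exact lt_of_le_of_ne this (fun h => haF.2 h.symm)
  have hbk : b < k := by
    have hmem : b ∈ c.support := c.snd_mem_support_of_mem_edges hb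
    have := c.support.toFinset.le_max' b (by simpa using hmem)
    rw [hk] at this
    exact lt_of_le_of_ne this (fun h => hbF.2 h.symm)
  exact pf_no_two pf hak hbk hab
    (by rw [Sym2.eq_swap]; exact haF.1) (by rw [Sym2.eq_swap]; exact hbF.1)

theorem aux_chain'_iff_get {α : Type*} {R : α → α → Prop} {l : List α} :
    List.Chain' R l ↔ ∀ (i : ℕ) (h : i < l.length - 1),
      R (l.get ⟨i, by omega⟩) (l.get ⟨i + 1, by omega⟩) := by
  unfold List.Chain'
  rw [List.isChain_iff_getElem]
  constructor <;> intro h i hi <;> exact h i (by omega)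

lemma pairFree_incForest {F : Finset (Sym2 (Fin n))} (pf : PairFree F) :
    IsIncreasingForest (SimpleGraph.fromEdgeSet (F : Set (Sym2 (Fin n)))) := by
  classical
  refine ⟨pairFree_acyclic pf, ?_⟩
  intro r v hr p hp
  have hchain : List.Chain' (SimpleGraph.fromEdgeSet (F : Set (Sym2 (Fin n)))).Adj p.support :=
    p.isChain_adj_support
  have hnd : p.support.Nodup := hp.support_nodup
  have hmem : ∀ w ∈ p.support, r ≤ w := fun w hw => hr w ⟨p.takeUntil w hw⟩
  rw [aux_chain'_iff_get]
  intro i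
  induction i using Nat.strong_induction_on with
  | _ i IH =>
  intro hi
  have hilen : i + 1 < p.support.length := by omega
  have hadj := aux_chain'_iff_get.mp hchain i hi
  by_contra hlt
  have hlt' : p.support.get ⟨i+1, by omega⟩ < p.support.get ⟨i, by omega⟩ :=
    lt_of_le_of_ne (le_of_not_gt hlt) hadj.ne'
  cases i with
  | zero =>
    have h0 : p.support.get ⟨0, by omega⟩ = r := by
      rw [aux_getVert_support_get]; exact p.getVert_zero
    rw [h0] at hlt'
    exact absurd (hmem _ (p.support.get_mem ⟨1, by omega⟩)) (not_le.mpr hlt')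
  | succ m =>
    have hm : m < p.support.length - 1 := by omega
    have hIH : p.support.get ⟨m, by omega⟩ < p.support.get ⟨m+1, by omega⟩ := IH m (by omega) hm
    have hadj2 := aux_chain'_iff_get.mp hchain m hm
    have hne : p.support.get ⟨m, by omega⟩ ≠ p.support.get ⟨m+1+1, by omega⟩ := by
      intro h
      have h2 := (hnd.get_inj_iff).mp h
      simp only [Fin.mk.injEq] at h2
      omega
    refine pf_no_two pf hIH hlt' hne ?_ ?_
    · exact fromEdgeSet_adj_mem hadj2
    · exact fromEdgeSet_adj_mem hadj.symm

lemma brokenCircuit_pair {G : SimpleGraph (Fin n)} {B : Finset (Sym2 (Fin n))}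
    (hB : IsBrokenCircuit G B) :
    ∃ i j k : Fin n, i < j ∧ j < k ∧ s(i,k) ∈ B ∧ s(j,k) ∈ B := by
  classical
  obtain ⟨v, c, e, hc, he, hmin, rfl⟩ := hB
  have hvert : ∀ (z w : Fin n), s(z,w) ∈ c.edges →
      z ≠ w ∧ z ∈ c.support ∧ w ∈ c.support := by
    intro z w hzw
    refine ⟨G.ne_of_adj ((G.mem_edgeSet).mp (c.edges_subset_edgeSet hzw)), ?_, ?_⟩
    · exact c.fst_mem_support_of_mem_edges hzw
    · exact c.snd_mem_support_of_mem_edges hzw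
  have hne : c.support.toFinset.Nonempty := ⟨v, by simp⟩
  set k := c.support.toFinset.max' hne with hk
  set m := c.support.toFinset.min' hne with hm
  have hkmem : k ∈ c.support := by
    have := c.support.toFinset.max'_mem hne; simpa using this
  have hmmem : m ∈ c.support := by
    have := c.support.toFinset.min'_mem hne; simpa using this
  have hle : ∀ w ∈ c.support, w ≤ k := fun w hw =>
    c.support.toFinset.le_max' w (by simpa using hw)
  have hge : ∀ w ∈ c.support, m ≤ w := fun w hw =>
    c.support.toFinset.min'_le w (by simpa using hw)
  obtain ⟨a, b, hab, ha, hb⟩ := aux_cycle_two_edges hc hkmem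
  obtain ⟨x, y, hxy, hx, hy⟩ := aux_cycle_two_edges hc hmmem
  have hak : a < k := lt_of_le_of_ne (hle a (hvert k a ha).2.2) (fun h => (hvert k a ha).1 h.symm)
  have hbk : b < k := lt_of_le_of_ne (hle b (hvert k b hb).2.2) (fun h => (hvert k b hb).1 h.symm)
  have hxm : m < x := lt_of_le_of_ne (hge x (hvert m x hx).2.2) (fun h => (hvert m x hx).1 h)
  have hym : m < y := lt_of_le_of_ne (hge y (hvert m y hy).2.2) (fun h => (hvert m y hy).1 h)
  have hkey : ∀ w : Fin n, w < k → s(k,w) ∈ c.edges → e ≠ s(k,w) := by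
    intro w hwk hw heq
    have aux : ∀ z : Fin n, m < z → s(m,z) ∈ c.edges → z = k := by
      intro z hmz hz
      have h1 := hmin _ hz
      rw [heq] at h1
      unfold edgeLE at h1
      rw [Sym2.inf_mk, Sym2.inf_mk, Sym2.sup_mk, Sym2.sup_mk,
        inf_eq_right.mpr hwk.le, inf_eq_left.mpr hmz.le,
        sup_eq_left.mpr hwk.le, sup_eq_right.mpr hmz.le] at h1
      have hwm : m ≤ w := hge w (hvert k w hw).2.2
      have hzk : z ≤ k := hle z (hvert m z hz).2.2
      rcases h1 with h1 | ⟨h1, h2⟩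
      · exact absurd h1 (not_lt.mpr hwm)
      · exact le_antisymm hzk h2
    have hx' := aux x hxm hx
    have hy' := aux y hym hy
    exact hxy (hx'.trans hy'.symm)
  have hamem : s(k,a) ∈ c.edges.toFinset.erase e :=
    Finset.mem_erase.mpr ⟨(hkey a hak ha).symm, List.mem_toFinset.mpr ha⟩
  have hbmem : s(k,b) ∈ c.edges.toFinset.erase e :=
    Finset.mem_erase.mpr ⟨(hkey b hbk hb).symm, List.mem_toFinset.mpr hb⟩
  rcases hab.lt_or_gt with h | h
  · exact ⟨a, b, k, h, hbk, by rwa [Sym2.eq_swap], by rwa [Sym2.eq_swap]⟩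
  · exact ⟨b, a, k, h, hak, by rwa [Sym2.eq_swap], by rwa [Sym2.eq_swap]⟩

lemma mem_coe_edgeSet {G : SimpleGraph (Fin n)} {F : Finset (Sym2 (Fin n))}
    (hsub : (F : Set (Sym2 (Fin n))) ⊆ G.edgeSet) {x y : Fin n}
    (h : s(x,y) ∈ F) : G.Adj x y :=
  (G.mem_edgeSet).mp (hsub (by exact_mod_cast h))

lemma peo_pair_not_NBC {G : SimpleGraph (Fin n)} (hpeo : IsPEO G)
    {F : Finset (Sym2 (Fin n))} (hsub : (F : Set (Sym2 (Fin n))) ⊆ G.edgeSet)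
    {i j k : Fin n} (hij : i < j) (hjk : j < k)
    (h1 : s(i,k) ∈ F) (h2 : s(j,k) ∈ F) : ¬ IsNBC G F := by
  classical
  rintro ⟨-, hnbc⟩
  have hik : G.Adj i k := mem_coe_edgeSet hsub h1
  have hjk' : G.Adj j k := mem_coe_edgeSet hsub h2
  have hij' : G.Adj i j := hpeo i j k hij hjk hik hjk'
  have hik' : i < k := hij.trans hjk
  have hpp : (Walk.cons hjk' (Walk.cons hik.symm Walk.nil)).IsPath := by
    rw [Walk.isPath_def]
    simp only [Walk.support_cons, Walk.support_nil, List.nodup_cons, List.mem_cons,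
      List.mem_singleton, List.not_mem_nil, or_false, List.nodup_nil, and_true, not_or]
    exact ⟨⟨hjk.ne, hij.ne'⟩, hik'.ne', not_false⟩
  have hcyc : (Walk.cons hij' (Walk.cons hjk' (Walk.cons hik.symm Walk.nil))).IsCycle := by
    rw [Walk.cons_isCycle_iff]
    refine ⟨hpp, ?_⟩
    simp only [Walk.edges_cons, Walk.edges_nil, List.mem_cons, List.not_mem_nil, or_false]
    rintro (h | h)
    · rcases Sym2.eq_iff.mp h with ⟨ha, hb⟩ | ⟨ha, hb⟩
      · exact hij.ne ha
      · exact hik'.ne ha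
    · rcases Sym2.eq_iff.mp h with ⟨ha, hb⟩ | ⟨ha, hb⟩
      · exact hik'.ne ha
      · exact hjk.ne hb
  set c := Walk.cons hij' (Walk.cons hjk' (Walk.cons hik.symm Walk.nil)) with hc
  have hedges : c.edges = [s(i,j), s(j,k), s(k,i)] := by
    simp [hc]
  have hemem : s(i,j) ∈ c.edges := by rw [hedges]; exact List.mem_cons_self
  have hmin : ∀ f ∈ c.edges, edgeLE s(i,j) f := by
    intro f hf
    rw [hedges] at hf
    simp only [List.mem_cons, List.not_mem_nil, or_false] at hf
    have hinfij : Sym2.inf s(i,j) = i := by rw [Sym2.inf_mk]; exact inf_eq_left.mpr hij.le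
    have hsupij : Sym2.sup s(i,j) = j := by rw [Sym2.sup_mk]; exact sup_eq_right.mpr hij.le
    rcases hf with rfl | rfl | rfl
    · right; exact ⟨rfl, le_refl _⟩
    · left
      rw [hinfij, Sym2.inf_mk, inf_eq_left.mpr hjk.le]
      exact hij
    · right
      constructor
      · rw [hinfij, Sym2.inf_mk, inf_eq_right.mpr hik'.le]
      · rw [hsupij, Sym2.sup_mk, sup_eq_left.mpr hik'.le]
        exact hjk.le
  have hB : c.edges.toFinset.erase s(i,j) ⊆ F := by
    intro f hf
    rw [hedges] at hf
    rw [Finset.mem_erase, List.mem_toFinset] at hf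
    obtain ⟨hne, hmem⟩ := hf
    simp only [List.mem_cons, List.not_mem_nil, or_false] at hmem
    rcases hmem with rfl | rfl | rfl
    · exact absurd rfl hne
    · exact h2
    · rw [Sym2.eq_swap]; exact h1
  exact hnbc _ ⟨i, c, s(i,j), hcyc, hemem, hmin, rfl⟩ hB

lemma isISF_iff {G : SimpleGraph (Fin n)} {F : Finset (Sym2 (Fin n))} :
    IsISF G F ↔ (F : Set (Sym2 (Fin n))) ⊆ G.edgeSet ∧ PairFree F :=
  ⟨fun ⟨a, b⟩ => ⟨a, incForest_pairFree b⟩, fun ⟨a, b⟩ => ⟨a, pairFree_incForest b⟩⟩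

lemma isNBC_iff {G : SimpleGraph (Fin n)} (hpeo : IsPEO G) {F : Finset (Sym2 (Fin n))} :
    IsNBC G F ↔ (F : Set (Sym2 (Fin n))) ⊆ G.edgeSet ∧ PairFree F := by
  constructor
  · intro h
    refine ⟨h.1, ?_⟩
    intro i j k hij hjk h1 h2
    exact peo_pair_not_NBC hpeo h.1 hij hjk h1 h2 h
  · rintro ⟨hsub, pf⟩
    refine ⟨hsub, ?_⟩
    intro B hB hBF
    obtain ⟨i, j, k, hij, hjk, h1, h2⟩ := brokenCircuit_pair hB
    exact pf i j k hij hjk (hBF h1) (hBF h2)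

lemma extract_adj {G : SimpleGraph (Fin n)} {i j k : Fin n} (hij : i < j) (hjk : j < k)
    (hik : G.Adj i k) (hjkadj : G.Adj j k)
    (hnot : ¬ IsNBC G ({s(i,k), s(j,k)} : Finset (Sym2 (Fin n)))) : G.Adj i j := by
  classical
  have hik' : i < k := hij.trans hjk
  have hne2 : s(i,k) ≠ s(j,k) := by
    intro h
    rcases Sym2.eq_iff.mp h with ⟨h1, _⟩ | ⟨_, h2⟩
    · exact hij.ne h1
    · exact hjk.ne h2.symm
  have hsub : (({s(i,k), s(j,k)} : Finset (Sym2 (Fin n))) : Set (Sym2 (Fin n))) ⊆ G.edgeSet := by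
    intro e he
    rw [Finset.coe_insert, Set.mem_insert_iff, Finset.coe_singleton,
      Set.mem_singleton_iff] at he
    rcases he with rfl | rfl
    · exact hik
    · exact hjkadj
  have hex : ∃ B, IsBrokenCircuit G B ∧ B ⊆ ({s(i,k), s(j,k)} : Finset (Sym2 (Fin n))) := by
    by_contra hcon
    push_neg at hcon
    exact hnot ⟨hsub, fun B hB => hcon B hB⟩
  obtain ⟨B, hBC, hBF⟩ := hex
  obtain ⟨v, c, e, hc, he, hmin, rfl⟩ := hBC
  have hnodup : c.edges.Nodup := hc.isCircuit.isTrail.edges_nodup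
  have hcard : c.edges.toFinset.card = c.length := by
    rw [List.toFinset_card_of_nodup hnodup, Walk.length_edges]
  have h3 := hc.three_le_length
  have hBcard : 2 ≤ (c.edges.toFinset.erase e).card := by
    rw [Finset.card_erase_of_mem (List.mem_toFinset.mpr he), hcard]
    omega
  have hFcard : ({s(i,k), s(j,k)} : Finset (Sym2 (Fin n))).card = 2 := by
    rw [Finset.card_insert_of_notMem (by simpa using hne2), Finset.card_singleton]
  have hBeq : c.edges.toFinset.erase e = ({s(i,k), s(j,k)} : Finset (Sym2 (Fin n))) :=
    Finset.eq_of_subset_of_card_le hBF (by omega)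
  have htoF : c.edges.toFinset = insert e ({s(i,k), s(j,k)} : Finset (Sym2 (Fin n))) := by
    rw [← hBeq, Finset.insert_erase (List.mem_toFinset.mpr he)]
  have hmemedge : ∀ x y : Fin n, x ≠ y → x ≠ k →
      c.edges.toFinset = insert e ({s(x,k), s(y,k)} : Finset (Sym2 (Fin n))) →
      s(x,k) ∈ c.edges → x ∈ e := by
    intro x y hxy hxk htoF' hxe
    have hxsup : x ∈ c.support := c.fst_mem_support_of_mem_edges hxe
    obtain ⟨a, b, hab, ha, hb⟩ := aux_cycle_two_edges hc hxsup
    have hcase : ∀ z : Fin n, s(x,z) ∈ c.edges → s(x,z) = e ∨ s(x,z) = s(x,k) := by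
      intro z hz
      have hmem := List.mem_toFinset.mpr hz
      rw [htoF', Finset.mem_insert, Finset.mem_insert, Finset.mem_singleton] at hmem
      rcases hmem with h | h | h
      · exact Or.inl h
      · exact Or.inr h
      · exfalso
        have hx : x ∈ s(y,k) := h ▸ Sym2.mem_mk_left x z
        rcases Sym2.mem_iff.mp hx with h' | h'
        · exact hxy h'
        · exact hxk h'
    rcases hcase a ha with h | h
    · exact h ▸ Sym2.mem_mk_left x a
    · rcases hcase b hb with h' | h'
      · exact h' ▸ Sym2.mem_mk_left x b
      · exact absurd (Sym2.congr_right.mp (h.trans h'.symm)) hab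
  have hikmem : s(i,k) ∈ c.edges := by
    refine List.mem_toFinset.mp ?_
    rw [htoF]; exact Finset.mem_insert_of_mem (Finset.mem_insert_self _ _)
  have hjkmem : s(j,k) ∈ c.edges := by
    refine List.mem_toFinset.mp ?_
    rw [htoF]
    exact Finset.mem_insert_of_mem (Finset.mem_insert_of_mem (Finset.mem_singleton_self _))
  have hie : i ∈ e := hmemedge i j hij.ne hik'.ne htoF hikmem
  have hje : j ∈ e := by
    refine hmemedge j i hij.ne' hjk.ne ?_ hjkmem
    rw [htoF, Finset.pair_comm]
  have heq : e = s(i,j) := (Sym2.mem_and_mem_iff hij.ne).mp ⟨hie, hje⟩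
  have := c.edges_subset_edgeSet he
  rw [heq] at this
  exact (G.mem_edgeSet).mp this

end Main

theorem stmt_4 {n : ℕ} (G : SimpleGraph (Fin n)) :
    List.TFAE
      [∀ m : ℕ,
          {F : Finset (Sym2 (Fin n)) | IsISF G F ∧ F.card = m} =
            {F : Finset (Sym2 (Fin n)) | IsNBC G F ∧ F.card = m},
        {F : Finset (Sym2 (Fin n)) | IsISF G F ∧ F.card = 2} =
          {F : Finset (Sym2 (Fin n)) | IsNBC G F ∧ F.card = 2},
        IsPEO G] := by
  tfae_have 1 → 2 := fun h => h 2
  tfae_have 2 → 3 := by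
    intro hb i j k hij hjk hik hjkadj
    classical
    have hne2 : s(i,k) ≠ s(j,k) := by
      intro h
      rcases Sym2.eq_iff.mp h with ⟨h1, _⟩ | ⟨_, h2⟩
      · exact hij.ne h1
      · exact hjk.ne h2.symm
    have hFcard : ({s(i,k), s(j,k)} : Finset (Sym2 (Fin n))).card = 2 := by
      rw [Finset.card_insert_of_notMem (by simpa using hne2), Finset.card_singleton]
    have hnotISF : ¬ IsISF G ({s(i,k), s(j,k)} : Finset (Sym2 (Fin n))) := by
      rintro ⟨-, hIF⟩
      exact incForest_pairFree hIF i j k hij hjk (Finset.mem_insert_self _ _)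
        (Finset.mem_insert_of_mem (Finset.mem_singleton_self _))
    have hiff := Set.ext_iff.mp hb ({s(i,k), s(j,k)} : Finset (Sym2 (Fin n)))
    simp only [Set.mem_setOf_eq] at hiff
    have hnotNBC : ¬ IsNBC G ({s(i,k), s(j,k)} : Finset (Sym2 (Fin n))) :=
      fun hn => hnotISF (hiff.mpr ⟨hn, hFcard⟩).1
    exact extract_adj hij hjk hik hjkadj hnotNBC
  tfae_have 3 → 1 := by
    intro hpeo m
    ext F
    simp only [Set.mem_setOf_eq, isISF_iff, isNBC_iff hpeo]
  tfae_finish
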